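/- Let a, b ∈ ℝ with -1 ≤ a < 0 and b > 0. Then for every y ≥ 0 there exists a unique x ∈ [0,∞) such that |1 + a·exp(-x/b)|·x = y. -/

import Mathlib

open Real

theorem stmt_6 (a b : ℝ) (ha1 : -1 ≤ a) (ha2 : a < 0) (hb : 0 < b) (y : ℝ) (hy : 0 ≤ y) :
    ∃! x : ℝ, 0 ≤ x ∧ |1 + a * Real.exp (-x / b)| * x = y := by
  set g : ℝ → ℝ := fun x => (1 + a * Real.exp (-x / b)) * x with hg
  -- nonnegativity of 1 + a exp(-x/b) for x ≥ 0
  have hpos : ∀ x : ℝ, 0 ≤ x → 0 ≤ 1 + a * Real.exp (-x / b) := by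
    intro x hx
    have he : Real.exp (-x / b) ≤ 1 := by
      rw [Real.exp_le_one_iff]
      rw [neg_div]
      linarith [div_nonneg hx hb.le]
    nlinarith [Real.exp_pos (-x / b)]
  have habs : ∀ x : ℝ, 0 ≤ x → |1 + a * Real.exp (-x / b)| * x = g x := by
    intro x hx
    rw [abs_of_nonneg (hpos x hx)]
  -- derivative
  have hderiv : ∀ x : ℝ, HasDerivAt g
      (a * (Real.exp (-x / b) * (-1 / b)) * x + (1 + a * Real.exp (-x / b))) x := by
    intro x
    have h1 : HasDerivAt (fun x : ℝ => -x / b) (-1 / b) x := by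
      simpa using ((hasDerivAt_id x).neg.div_const b)
    have h2 : HasDerivAt (fun x : ℝ => Real.exp (-x / b))
        (Real.exp (-x / b) * (-1 / b)) x := h1.exp
    have h3 : HasDerivAt (fun x : ℝ => 1 + a * Real.exp (-x / b))
        (a * (Real.exp (-x / b) * (-1 / b))) x := by
      simpa using ((h2.const_mul a).const_add 1)
    convert h3.mul (hasDerivAt_id x) using 1
    · ext t; simp [hg]
    · rfl
    · rfl
    · simp
  have hcont : Continuous g := by
    have : Differentiable ℝ g := fun x => (hderiv x).differentiableAt
    exact this.continuous
  -- strict mono on Ici 0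
  have hmono : StrictMonoOn g (Set.Ici 0) := by
    apply strictMonoOn_of_deriv_pos (convex_Ici 0) hcont.continuousOn
    intro x hx
    rw [interior_Ici] at hx
    rw [(hderiv x).deriv]
    have hE0 : 0 < Real.exp (-x / b) := Real.exp_pos _
    have hE1 : Real.exp (-x / b) < 1 := by
      rw [Real.exp_lt_one_iff]
      exact div_neg_of_neg_of_pos (neg_neg_iff_pos.mpr hx) hb
    set E := Real.exp (-x / b)
    have hx0 : 0 < x := hx
    have key : -b < a * E * (b - x) := by
      rcases le_or_gt b x with h | h
      · nlinarith [mul_nonneg (mul_nonneg (neg_nonneg.mpr ha2.le) hE0.le) (sub_nonneg.mpr h)]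
      · nlinarith [mul_pos hE0 (sub_pos.mpr h)]
    have : a * (E * (-1 / b)) * x + (1 + a * E) = 1 + a * E * (b - x) / b := by
      field_simp; ring
    rw [this]
    have : -1 < a * E * (b - x) / b := by
      rw [neg_lt, ← neg_div]
      exact (div_lt_one hb).mpr (by linarith)
    linarith
  -- existence
  obtain ⟨M, hM0, hMy⟩ : ∃ M : ℝ, 0 ≤ M ∧ y ≤ g M := by
    refine ⟨max (2 * y) (b * Real.log 2), le_max_of_le_left (by linarith), ?_⟩
    set M := max (2 * y) (b * Real.log 2) with hMdef
    have h2y : 2 * y ≤ M := le_max_left _ _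
    have hlog : b * Real.log 2 ≤ M := le_max_right _ _
    have hE : Real.exp (-M / b) ≤ 1 / 2 := by
      rw [show (1:ℝ)/2 = Real.exp (Real.log (1/2)) by rw [Real.exp_log]; norm_num]
      apply Real.exp_le_exp.mpr
      rw [Real.log_div one_ne_zero (by norm_num), Real.log_one]
      rw [neg_div, neg_le, neg_sub, sub_zero, le_div_iff₀ hb]
      linarith
    have hM0 : 0 ≤ M := le_trans (by positivity) hlog
    have haE : -(1/2) ≤ a * Real.exp (-M / b) := by
      nlinarith [Real.exp_pos (-M / b)]
    have hnn := mul_nonneg (by linarith : (0:ℝ) ≤ 1/2 + a * Real.exp (-M / b)) hM0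
    simp only [hg]
    nlinarith
  obtain ⟨x, hxmem, hxval⟩ := intermediate_value_Icc hM0 hcont.continuousOn
    (⟨by simpa [hg] using hy, hMy⟩ : y ∈ Set.Icc (g 0) (g M))
  refine ⟨x, ⟨hxmem.1, by rw [habs x hxmem.1]; exact hxval⟩, ?_⟩
  rintro z ⟨hz0, hzval⟩
  rw [habs z hz0] at hzval
  exact hmono.injOn hz0 hxmem.1 (by rw [hzval, hxval])
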